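/- Let X be a finite nonempty type and M ∈ ℝ^{X×X} a matrix with nonnegative entries such that every column of M sums to at most 1. Suppose there exists no probability vector ν ∈ ℝ^X (i.e., ν with nonnegative entries summing to 1) satisfying M ν = ν. Then every eigenvalue λ ∈ ℂ of M, viewed as a matrix over ℂ, satisfies |λ| < 1; equivalently, the spectral radius of M is strictly less than 1. -/

import Mathlib

/-- Lemma B.4 (lem:inverse): a nonnegative matrix with column sums at most 1
that admits no stationary probability vector has spectral radius strictly
less than 1, i.e., every complex eigenvalue has modulus `< 1`. -/
theorem spectral_radius_lt_one_of_no_stationary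
    {X : Type*} [Fintype X] [Nonempty X] [DecidableEq X]
    (M : Matrix X X ℝ)
    (hnn : ∀ x' x : X, 0 ≤ M x' x)
    (hcol : ∀ x : X, ∑ x' : X, M x' x ≤ 1)
    (hno : ¬ ∃ ν : X → ℝ, (∀ x, 0 ≤ ν x) ∧ (∑ x, ν x = 1) ∧ M.mulVec ν = ν) :
    ∀ ev : ℂ, (Matrix.charpoly (M.map (fun a : ℝ => (a : ℂ)))).IsRoot ev →
      ‖ev‖ < 1 := by
  intro ev hroot
  set M' : Matrix X X ℂ := M.map (fun a : ℝ => (a : ℂ)) with hM'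
  -- charpoly evaluated at ev is det (diagonal ev - M')
  have hdet : (Matrix.diagonal (fun _ : X => ev) - M').det = 0 := by
    have := hroot
    rw [Polynomial.IsRoot, Matrix.charpoly, ← Polynomial.coe_evalRingHom,
      RingHom.map_det] at this
    convert this using 2
    ext i j
    by_cases h : i = j
    · subst h
      simp [Matrix.charmatrix_apply_eq]
    · simp [Matrix.charmatrix_apply_ne _ _ _ h, Matrix.diagonal_apply_ne _ h]
  obtain ⟨v, hv0, hv⟩ := (Matrix.exists_mulVec_eq_zero_iff).mpr hdet
  have heig : ∀ x, (M'.mulVec v) x = ev * v x := by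
    intro x
    have := congrFun hv x
    rw [Matrix.sub_mulVec] at this
    have h2 : (Matrix.diagonal (fun _ : X => ev)).mulVec v x = ev * v x := by
      rw [Matrix.mulVec_diagonal]
    have := sub_eq_zero.mp this
    rw [h2] at this
    exact this.symm
  -- the nonnegative vector of absolute values
  set w : X → ℝ := fun x => ‖v x‖ with hw
  have hwnn : ∀ x, 0 ≤ w x := fun x => norm_nonneg _
  have hSpos : 0 < ∑ x, w x := by
    obtain ⟨x, hx⟩ := Function.ne_iff.mp hv0
    exact Finset.sum_pos' (fun x _ => hwnn x)
      ⟨x, Finset.mem_univ x, by simpa [hw] using hx⟩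
  -- pointwise bound: |ev| * w x ≤ (M.mulVec w) x
  have hpt : ∀ x, ‖ev‖ * w x ≤ (M.mulVec w) x := by
    intro x
    have h1 : ‖ev‖ * w x = ‖(M'.mulVec v) x‖ := by
      rw [heig x, norm_mul]
    rw [h1]
    calc ‖∑ y, M' x y * v y‖
        ≤ ∑ y, ‖M' x y * v y‖ := norm_sum_le _ _
      _ = ∑ y, M x y * w y := by
          refine Finset.sum_congr rfl fun y _ => ?_
          rw [norm_mul]
          simp [hM', hw, Complex.norm_real, abs_of_nonneg (hnn x y)]
      _ = (M.mulVec w) x := rfl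
  -- sum bound: ∑ (M.mulVec w) ≤ ∑ w
  have hsum : ∑ x, (M.mulVec w) x ≤ ∑ x, w x := by
    have : ∑ x, (M.mulVec w) x = ∑ y, (∑ x, M x y) * w y := by
      simp only [Matrix.mulVec, dotProduct, Finset.sum_mul]
      exact Finset.sum_comm
    rw [this]
    calc ∑ y, (∑ x, M x y) * w y ≤ ∑ y, 1 * w y :=
          Finset.sum_le_sum fun y _ => mul_le_mul_of_nonneg_right (hcol y) (hwnn y)
      _ = ∑ y, w y := by simp
  by_contra hlt
  push_neg at hlt
  -- then |ev| = 1 and all inequalities are equalities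
  have hle : ‖ev‖ * ∑ x, w x ≤ ∑ x, w x := by
    calc ‖ev‖ * ∑ x, w x = ∑ x, ‖ev‖ * w x := Finset.mul_sum _ _ _
      _ ≤ ∑ x, (M.mulVec w) x := Finset.sum_le_sum fun x _ => hpt x
      _ ≤ ∑ x, w x := hsum
  have habs1 : ‖ev‖ = 1 := by
    have : ‖ev‖ ≤ 1 := by
      by_contra h
      push_neg at h
      nlinarith
    linarith
  have hsum_eq : ∑ x, (M.mulVec w) x = ∑ x, w x := by
    have h1 : ∑ x, w x ≤ ∑ x, (M.mulVec w) x := by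
      calc ∑ x, w x = ∑ x, ‖ev‖ * w x := by simp [habs1]
        _ ≤ ∑ x, (M.mulVec w) x := Finset.sum_le_sum fun x _ => hpt x
    linarith
  -- pointwise equality: M.mulVec w = w
  have hfix : M.mulVec w = w := by
    funext x
    have key : ∀ x ∈ Finset.univ, w x ≤ (M.mulVec w) x := by
      intro x _
      have := hpt x
      rwa [habs1, one_mul] at this
    have hzero : ∑ x, ((M.mulVec w) x - w x) = 0 := by
      rw [Finset.sum_sub_distrib, hsum_eq, sub_self]
    have := (Finset.sum_eq_zero_iff_of_nonneg
      (fun x hx => sub_nonneg.mpr (key x hx))).mp hzero x (Finset.mem_univ x)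
    linarith [sub_eq_zero.mp this]
  -- build a stationary probability vector: contradiction
  exact hno ⟨(∑ x, w x)⁻¹ • w,
    fun x => mul_nonneg (inv_nonneg.mpr hSpos.le) (hwnn x),
    by simp only [Pi.smul_apply, smul_eq_mul, ← Finset.mul_sum]; field_simp,
    by rw [Matrix.mulVec_smul, hfix]⟩
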